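/- Suppose for every asset k that the map Γ_k ↦ (M_k − Γ_k) f_{Γ,k}′(Γ_k)/f_{Γ,k}(Γ_k) (which is ≤ 0) is nondecreasing on [0, M_k), and that α_k ∈ ( −M_k f_{Γ,k}′(0)/((1 − M_k f_{Γ,k}′(0)) θ_min), 1/θ_min ). Then any solution Π : [0,T] → ℝⁿ of the proportional-liquidation clearing system satisfies Π(t) ∈ [0,1)ⁿ, Π̇(t) ∈ ℝ₊ⁿ, and q̇(t) ∈ −ℝ₊ᵐ for all times t ∈ [0,T]. -/

import Mathlib

open Set Matrix

noncomputable section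

private lemma deriv_nonpos_of_right_le {f : ℝ → ℝ} {x f' : ℝ}
    (hf : HasDerivAt f f' x) (h : ∀ y, x ≤ y → f y ≤ f x) : f' ≤ 0 := by
  have htend : Filter.Tendsto (slope f x) (nhdsWithin x (Ioi x)) (nhds f') :=
    (hasDerivAt_iff_tendsto_slope.mp hf).mono_left
      (nhdsWithin_mono x fun y hy => ne_of_gt hy)
  refine le_of_tendsto htend ?_
  filter_upwards [self_mem_nhdsWithin] with y hy
  have h1 : f y - f x ≤ 0 := sub_nonpos.mpr (h y (le_of_lt hy))
  have h2 : (0:ℝ) < y - x := sub_pos.mpr hy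
  have : slope f x y = (f y - f x) / (y - x) := by
    rw [slope_def_field]
  rw [this]
  exact div_nonpos_of_nonpos_of_nonneg h1 (le_of_lt h2)

set_option maxHeartbeats 4000000 in

/-- **Lemma 3.11 (n-bank, m-asset monotonicity).**
If, for every asset `k`, `γ ↦ (Mₖ - γ) fΓₖ'(γ)/fΓₖ(γ)` is nondecreasing on `[0, Mₖ)`
and `αₖ ∈ (-(Mₖ fΓₖ'(0))/((1 - Mₖ fΓₖ'(0)) θmin), 1/θmin)`, then any solution
`Π : [0,T] → ℝⁿ` of the proportional-liquidation clearing system satisfies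
`Π(t) ∈ [0,1)ⁿ`, `Π̇(t) ∈ ℝ₊ⁿ` and `q̇(t) ∈ -ℝ₊ᵐ` for all `t ∈ [0, T]`. -/
theorem nm_asset_monotone_liquidation
    (n m : ℕ) (hn : 0 < n) (hm : 0 < m)
    (T θmin : ℝ) (hT : 0 ≤ T) (hθmin : 0 < θmin)
    (x ℓ pbar αl : Fin n → ℝ) (s : Fin n → Fin m → ℝ) (α M : Fin m → ℝ)
    (hx : ∀ i, 0 ≤ x i) (hℓ : ∀ i, 0 ≤ ℓ i) (hpbar : ∀ i, 0 ≤ pbar i)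
    (hαl : ∀ i, 0 ≤ αl i) (hs : ∀ i k, 0 ≤ s i k)
    (hα : ∀ k, 0 < α k) (hαθ : ∀ k, α k * θmin < 1)
    (hM : ∀ k, ∑ i, s i k ≤ M k)
    (ft fΓ : Fin m → ℝ → ℝ)
    (hftC : ∀ k, ContDiff ℝ 1 (ft k)) (hftanti : ∀ k, AntitoneOn (ft k) (Ici 0))
    (hftmem : ∀ k, ∀ t ∈ Ici (0 : ℝ), ft k t ∈ Ioc (0 : ℝ) 1) (hft0 : ∀ k, ft k 0 = 1)
    (hfΓC : ∀ k, ContDiff ℝ 2 (fΓ k)) (hfΓanti : ∀ k, Antitone (fΓ k))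
    (hfΓpos : ∀ k γ, 0 < fΓ k γ) (hfΓ0 : ∀ k, fΓ k 0 = 1)
    -- key assumption on each inverse demand function
    (hmono : ∀ k, MonotoneOn (fun γ => (M k - γ) * deriv (fΓ k) γ / fΓ k γ)
      (Ico 0 (M k)))
    -- key assumption on the risk-weights
    (hαmem : ∀ k, α k ∈ Ioo
      (-(M k * deriv (fΓ k) 0) / ((1 - M k * deriv (fΓ k) 0) * θmin)) (1 / θmin))
    -- the solution: fractional liquidations `Π`, prices `q`, cash `Ψ`
    (Pi Pi' : ℝ → Fin n → ℝ) (Ψ : ℝ → Fin n → ℝ) (q q' : ℝ → Fin m → ℝ)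
    -- the price processes
    (hq : ∀ t k, q t k = ft k t * fΓ k (∑ j, s j k * Pi t j))
    -- initial conditions
    (hPi0 : Pi 0 = 0) (hΨ0 : Ψ 0 = 0)
    -- each bank satisfies the capital ratio requirement at time 0
    (hθ0 : ∀ i, θmin ≤
      max (x i + Ψ 0 i + (∑ k, s i k * (1 - Pi 0 i) * q 0 k) + ℓ i - pbar i) 0 /
        ((∑ k, α k * s i k * (1 - Pi 0 i) * q 0 k) + αl i * ℓ i))
    -- the matrix `Z(t, diag[Π(t)]s)` (with the regulatory-threshold indicators)
    (Z : ℝ → Matrix (Fin n) (Fin m) ℝ)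
    (hZ : ∀ t i k, Z t i k =
      (if max (x i + Ψ t i + (∑ l, s i l * (1 - Pi t i) * q t l) + ℓ i - pbar i) 0 /
          ((∑ l, α l * s i l * (1 - Pi t i) * q t l) + αl i * ℓ i) ≤ θmin
        then 1 else 0) *
      (s i k * (1 - Pi t i) * (1 - α k * θmin)) /
        (∑ l, s i l * (α l * θmin) * ft l t * fΓ l (∑ j, s j l * Pi t j)))
    -- `Π`, `Ψ` and `q` are differentiable with the stated derivatives
    (hPideriv : ∀ t ∈ Icc 0 T, HasDerivAt Pi (Pi' t) t)
    (hΨderiv : ∀ t ∈ Icc 0 T,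
      HasDerivAt Ψ (fun i => Pi' t i * ∑ k, s i k * q t k) t)
    (hqderiv : ∀ t ∈ Icc 0 T, HasDerivAt q (q' t) t)
    -- the clearing ODE for `Π`
    (hODE : ∀ t ∈ Icc 0 T, Pi' t =
      -(((1 : Matrix (Fin n) (Fin n) ℝ) +
          Z t * diagonal (fun k => ft k t * deriv (fΓ k) (∑ j, s j k * Pi t j)) *
            (of fun i k => s i k)ᵀ)⁻¹).mulVec
        ((Z t).mulVec (fun k => deriv (ft k) t * fΓ k (∑ j, s j k * Pi t j))))
    -- the clearing ODE for `q`
    (hqODE : ∀ t ∈ Icc 0 T, q' t =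
      (((1 : Matrix (Fin m) (Fin m) ℝ) +
          diagonal (fun k => ft k t * deriv (fΓ k) (∑ j, s j k * Pi t j)) *
            (of fun i k => s i k)ᵀ * Z t)⁻¹).mulVec
        (fun k => deriv (ft k) t * fΓ k (∑ j, s j k * Pi t j))) :
    ∀ t ∈ Icc 0 T, (∀ i, Pi t i ∈ Ico (0 : ℝ) 1) ∧ (∀ i, 0 ≤ Pi' t i) ∧
      (∀ k, q' t k ≤ 0) := by
  classical
  have hNm : Nonempty (Fin m) := ⟨⟨0, hm⟩⟩
  have hUm : (Finset.univ : Finset (Fin m)).Nonempty := Finset.univ_nonempty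
  -- basic positivity facts
  have hαθpos : ∀ k, 0 < α k * θmin := fun k => mul_pos (hα k) hθmin
  have h1αθ : ∀ k, 0 < 1 - α k * θmin := fun k => sub_pos.mpr (hαθ k)
  have hMnn : ∀ k, 0 ≤ M k :=
    fun k => le_trans (Finset.sum_nonneg fun j _ => hs j k) (hM k)
  have hftdiff : ∀ k, Differentiable ℝ (ft k) := fun k => (hftC k).differentiable (by norm_num)
  have hfΓdiff : ∀ k, Differentiable ℝ (fΓ k) :=
    fun k => (hfΓC k).differentiable (by norm_num)
  have hftpos : ∀ k t, (0:ℝ) ≤ t → 0 < ft k t := fun k t ht => (hftmem k t ht).1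
  have hdΓ : ∀ k γ, deriv (fΓ k) γ ≤ 0 := by
    intro k γ
    exact deriv_nonpos_of_right_le (hfΓdiff k γ).hasDerivAt
      (fun y hy => hfΓanti k hy)
  have hdft : ∀ k t, (0:ℝ) ≤ t → deriv (ft k) t ≤ 0 := by
    intro k t ht
    exact deriv_nonpos_of_right_le (hftdiff k t).hasDerivAt
      (fun y hy => hftanti k ht (le_trans ht hy) hy)
  -- componentwise derivatives
  have hPic : ∀ t ∈ Icc 0 T, ∀ i, HasDerivAt (fun τ => Pi τ i) (Pi' t i) t :=
    fun t ht i => hasDerivAt_pi.mp (hPideriv t ht) i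
  have hqc : ∀ t ∈ Icc 0 T, ∀ k, HasDerivAt (fun τ => q τ k) (q' t k) t :=
    fun t ht k => hasDerivAt_pi.mp (hqderiv t ht) k
  have hud : ∀ t ∈ Icc 0 T, ∀ k,
      HasDerivAt (fun τ => ∑ j, s j k * Pi τ j) (∑ j, s j k * Pi' t j) t :=
    fun t ht k => HasDerivAt.fun_sum (fun j _ => (hPic t ht j).const_mul (s j k))
  -- chain rule for q
  have hCR : ∀ t ∈ Icc 0 T, ∀ k, q' t k =
      deriv (ft k) t * fΓ k (∑ j, s j k * Pi t j) +
        ft k t * (deriv (fΓ k) (∑ j, s j k * Pi t j) * ∑ j, s j k * Pi' t j) := by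
    intro t ht k
    have hft' : HasDerivAt (ft k) (deriv (ft k) t) t := (hftdiff k t).hasDerivAt
    have hout : HasDerivAt (fΓ k) (deriv (fΓ k) (∑ j, s j k * Pi t j))
        (∑ j, s j k * Pi t j) := (hfΓdiff k _).hasDerivAt
    have hcomp := hout.comp t (hud t ht k)
    have h1 := hft'.mul hcomp
    have h3 := hqc t ht k
    have h2 : (fun τ => q τ k) = fun τ => ft k τ * fΓ k (∑ j, s j k * Pi τ j) :=
      funext fun τ => hq τ k
    rw [h2] at h3
    have := h3.unique h1
    simpa [Function.comp] using this
  -- the fundamental relation between `Pi'` and `q'`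
  have hREL : ∀ t ∈ Icc 0 T, ∀ i, Pi' t i = -∑ k, Z t i k * q' t k := by
    intro t ht
    have hO := hODE t ht
    have hqO := hqODE t ht
    have hCRt := hCR t ht
    set Dg : Matrix (Fin m) (Fin m) ℝ :=
      diagonal (fun k => ft k t * deriv (fΓ k) (∑ j, s j k * Pi t j)) with hDg_def
    set S' : Matrix (Fin m) (Fin n) ℝ := (of fun i k => s i k)ᵀ with hS'_def
    set w : Fin m → ℝ := fun k => deriv (ft k) t * fΓ k (∑ j, s j k * Pi t j) with hw_def
    by_cases hdet : IsUnit (1 + Z t * Dg * S' : Matrix (Fin n) (Fin n) ℝ).det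
    · have h1 : (1 + Z t * Dg * S') *ᵥ Pi' t = -(Z t *ᵥ w) := by
        rw [hO, Matrix.mulVec_neg, Matrix.mulVec_mulVec, Matrix.mul_nonsing_inv _ hdet,
          Matrix.one_mulVec]
      intro i
      have h2 := congrFun h1 i
      rw [Matrix.add_mulVec, Matrix.one_mulVec] at h2
      have h3 : ((Z t * Dg * S') *ᵥ Pi' t) = Z t *ᵥ (Dg *ᵥ (S' *ᵥ Pi' t)) := by
        rw [Matrix.mul_assoc, ← Matrix.mulVec_mulVec, ← Matrix.mulVec_mulVec]
      rw [h3] at h2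
      simp only [_root_.Pi.add_apply, _root_.Pi.neg_apply] at h2
      have hS'v : ∀ k, (S' *ᵥ Pi' t) k = ∑ j, s j k * Pi' t j := by
        intro k
        simp [hS'_def, Matrix.mulVec, dotProduct]
      have e1 : ∀ (v : Fin m → ℝ), (Z t *ᵥ v) i = ∑ k, Z t i k * v k := fun v => rfl
      have h5 : (Z t *ᵥ (Dg *ᵥ (S' *ᵥ Pi' t))) i =
          ∑ k, Z t i k * ((ft k t * deriv (fΓ k) (∑ j, s j k * Pi t j)) *
            ∑ j, s j k * Pi' t j) := by
        rw [e1]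
        refine Finset.sum_congr rfl fun k _ => ?_
        congr 1
        rw [hDg_def, Matrix.mulVec_diagonal, hS'v k]
      rw [h5, e1] at h2
      -- h2 : Pi' t i + ∑ k, Z t i k * (D_k * w'_k) = -∑ k, Z t i k * w k
      have h6 : ∑ k, Z t i k * q' t k =
          (∑ k, Z t i k * w k) +
            ∑ k, Z t i k * ((ft k t * deriv (fΓ k) (∑ j, s j k * Pi t j)) *
              ∑ j, s j k * Pi' t j) := by
        rw [← Finset.sum_add_distrib]
        refine Finset.sum_congr rfl fun k _ => ?_
        rw [hCRt k, hw_def]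
        ring
      rw [h6]
      linarith
    · have hPz : Pi' t = 0 := by
        rw [hO, Matrix.nonsing_inv_apply_not_isUnit _ hdet, Matrix.zero_mulVec, neg_zero]
      have hdet2 : ¬ IsUnit (1 + Dg * S' * Z t : Matrix (Fin m) (Fin m) ℝ).det := by
        intro hcon
        apply hdet
        have hcomm := Matrix.det_one_add_mul_comm (Z t) (Dg * S')
        rw [← Matrix.mul_assoc] at hcomm
        rwa [hcomm]
      have hqz : q' t = 0 := by
        rw [hqO, Matrix.nonsing_inv_apply_not_isUnit _ hdet2, Matrix.zero_mulVec]
      intro i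
      rw [hPz, hqz]
      simp
    
  -- constants
  set c : Fin m → ℝ := fun k => α k * θmin / (1 - α k * θmin) with hc_def
  have hcpos : ∀ k, 0 < c k := fun k => div_pos (hαθpos k) (h1αθ k)
  set ρbar : Fin m → ℝ :=
    fun k => M k * (-(deriv (fΓ k) 0)) * (1 - α k * θmin) / (α k * θmin) with hρbar_def
  have hρbar_nn : ∀ k, 0 ≤ ρbar k := by
    intro k
    exact div_nonneg (mul_nonneg (mul_nonneg (hMnn k)
      (neg_nonneg.mpr (hdΓ k 0))) (le_of_lt (h1αθ k))) (le_of_lt (hαθpos k))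
  have hρbar_lt1 : ∀ k, ρbar k < 1 := by
    intro k
    have h1 := (hαmem k).1
    have hd0 : deriv (fΓ k) 0 ≤ 0 := hdΓ k 0
    have hMd : 0 ≤ M k * (-(deriv (fΓ k) 0)) := mul_nonneg (hMnn k) (neg_nonneg.mpr hd0)
    have hden : 0 < (1 - M k * deriv (fΓ k) 0) * θmin := by nlinarith
    have h2 := (div_lt_iff₀ hden).mp h1
    rw [hρbar_def]
    dsimp only
    rw [div_lt_one (hαθpos k)]
    nlinarith
  have hρbarc : ∀ k, ρbar k * c k = M k * (-(deriv (fΓ k) 0)) := by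
    intro k
    have h1 : α k * θmin ≠ 0 := ne_of_gt (hαθpos k)
    have h2 : 1 - α k * θmin ≠ 0 := ne_of_gt (h1αθ k)
    rw [hρbar_def, hc_def]
    dsimp only
    field_simp
    rw [mul_div_cancel_right₀ _ (ne_of_gt (hα k))]
  set ρt : Fin m → ℝ := fun k => (ρbar k + 1) / 2 with hρt_def
  have hρt_pos : ∀ k, 0 < ρt k := fun k => by
    have := hρbar_nn k; rw [hρt_def]; dsimp only; linarith
  have hρt_lt1 : ∀ k, ρt k < 1 := fun k => by
    have := hρbar_lt1 k; rw [hρt_def]; dsimp only; linarith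
  have hρbar_lt_ρt : ∀ k, ρbar k < ρt k := fun k => by
    have := hρbar_lt1 k; rw [hρt_def]; dsimp only; linarith
  set ρhat : ℝ := Finset.univ.sup' hUm ρt with hρhat_def
  have hρhat_lt1 : ρhat < 1 := (Finset.sup'_lt_iff hUm).mpr fun k _ => hρt_lt1 k
  have hρt_le_ρhat : ∀ k, ρt k ≤ ρhat := fun k => Finset.le_sup' ρt (Finset.mem_univ k)
  have hρhat_nn : 0 ≤ ρhat :=
    le_trans (le_of_lt (hρt_pos ⟨0, hm⟩)) (hρt_le_ρhat ⟨0, hm⟩)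
  -- uniform bound on the time-decay rate
  have hCex : ∀ k, ∃ Ck : ℝ, 0 ≤ Ck ∧
      ∀ τ ∈ Icc (0:ℝ) T, -(deriv (ft k) τ) / (c k * ft k τ) ≤ Ck := by
    intro k
    have hcont : ContinuousOn (fun τ => -(deriv (ft k) τ) / (c k * ft k τ)) (Icc 0 T) := by
      apply ContinuousOn.div
      · exact ((hftC k).continuous_deriv le_rfl).neg.continuousOn
      · exact (continuous_const.mul (hftC k).continuous).continuousOn
      · intro τ hτ
        exact ne_of_gt (mul_pos (hcpos k) (hftpos k τ hτ.1))
    obtain ⟨x0, hx0, hmax⟩ := isCompact_Icc.exists_isMaxOn (nonempty_Icc.mpr hT) hcont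
    refine ⟨-(deriv (ft k) x0) / (c k * ft k x0), ?_, ?_⟩
    · exact div_nonneg (neg_nonneg.mpr (hdft k x0 hx0.1))
        (le_of_lt (mul_pos (hcpos k) (hftpos k x0 hx0.1)))
    · intro τ hτ
      exact hmax hτ
  choose C hCnn hC using hCex
  set K : ℝ := Finset.univ.sup' hUm C / (1 - ρhat) with hK_def
  have hKnn : 0 ≤ K := by
    refine div_nonneg (le_trans (hCnn ⟨0, hm⟩) ?_) (by linarith)
    exact Finset.le_sup' C (Finset.mem_univ _)
  -- the main pointwise sign lemma
  have hSIGN : ∀ t ∈ Icc 0 T, (∀ i, Pi t i ≤ 1) →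
      (∀ k, (-(deriv (fΓ k) (∑ j, s j k * Pi t j))) *
          ((∑ j, s j k) - ∑ j, s j k * Pi t j)
        ≤ ρt k * (c k * fΓ k (∑ j, s j k * Pi t j))) →
      (∀ k, q' t k ≤ 0) ∧ (∀ i, 0 ≤ Pi' t i) ∧
        (∀ i, Pi' t i ≤ (1 - Pi t i) * K) := by
    intro t ht hP1 hQ
    have ht0 : (0:ℝ) ≤ t := ht.1
    have hF : ∀ k, 0 < ft k t := fun k => hftpos k t ht0
    have hG : ∀ k, 0 < fΓ k (∑ j, s j k * Pi t j) := fun k => hfΓpos k _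
    set φ : Fin m → ℝ := fun k => c k * (ft k t * fΓ k (∑ j, s j k * Pi t j)) with hφ_def
    have hφpos : ∀ k, 0 < φ k := by
      intro k
      rw [hφ_def]
      exact mul_pos (hcpos k) (mul_pos (hF k) (hG k))
    have hZnn : ∀ i k, 0 ≤ Z t i k := by
      intro i k
      rw [hZ t i k]
      apply div_nonneg
      · apply mul_nonneg
        · split <;> norm_num
        · exact mul_nonneg (mul_nonneg (hs i k) (by linarith [hP1 i]))
            (le_of_lt (h1αθ k))
      · exact Finset.sum_nonneg fun l _ =>
          mul_nonneg (mul_nonneg (mul_nonneg (hs i l) (le_of_lt (hαθpos l)))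
            (le_of_lt (hF l))) (le_of_lt (hG l))
    -- key row bound
    have hrow : ∀ i, ∑ k, Z t i k * φ k ≤ 1 - Pi t i := by
      intro i
      have hZi := hZ t i
      set den : ℝ := ∑ l, s i l * (α l * θmin) * ft l t *
        fΓ l (∑ j, s j l * Pi t j) with hden_def
      set η : ℝ := (if
          max (x i + Ψ t i + (∑ l, s i l * (1 - Pi t i) * q t l) + ℓ i - pbar i) 0 /
            ((∑ l, α l * s i l * (1 - Pi t i) * q t l) + αl i * ℓ i) ≤ θmin
        then (1:ℝ) else 0) with hη_def
      have hη0 : 0 ≤ η := by rw [hη_def]; split <;> norm_num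
      have hη1 : η ≤ 1 := by rw [hη_def]; split <;> norm_num
      have h1P : 0 ≤ 1 - Pi t i := by linarith [hP1 i]
      have hdennn : 0 ≤ den := by
        rw [hden_def]
        exact Finset.sum_nonneg fun l _ =>
          mul_nonneg (mul_nonneg (mul_nonneg (hs i l) (le_of_lt (hαθpos l)))
            (le_of_lt (hF l))) (le_of_lt (hG l))
      by_cases hden0 : den = 0
      · have hden0' : ∑ l, s i l * (α l * θmin) * ft l t *
            fΓ l (∑ j, s j l * Pi t j) = 0 := by rw [← hden_def]; exact hden0
        have hterm := (Finset.sum_eq_zero_iff_of_nonneg (fun l _ =>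
          mul_nonneg (mul_nonneg (mul_nonneg (hs i l) (le_of_lt (hαθpos l)))
            (le_of_lt (hF l))) (le_of_lt (hG l)))).mp hden0'
        have hsi0 : ∀ l, s i l = 0 := by
          intro l
          have h := hterm l (Finset.mem_univ l)
          by_contra hcon
          have hpos : 0 < s i l := lt_of_le_of_ne (hs i l) (Ne.symm hcon)
          have := mul_pos (mul_pos (mul_pos hpos (hαθpos l)) (hF l)) (hG l)
          linarith
        have hZ0 : ∀ k, Z t i k = 0 := by
          intro k
          rw [hZi k, hsi0 k]
          simp
        have : ∑ k, Z t i k * φ k = 0 :=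
          Finset.sum_eq_zero fun k _ => by rw [hZ0 k, zero_mul]
        linarith
      · have hdenpos : 0 < den := lt_of_le_of_ne hdennn (Ne.symm hden0)
        have hterm2 : ∀ k, Z t i k * φ k = η * (1 - Pi t i) / den *
            (s i k * (α k * θmin) * ft k t * fΓ k (∑ j, s j k * Pi t j)) := by
          intro k
          rw [hZi k, hφ_def, hc_def]
          dsimp only
          have h2 : (1 - α k * θmin) ≠ 0 := ne_of_gt (h1αθ k)
          field_simp
        have hsum : ∑ k, Z t i k * φ k = η * (1 - Pi t i) := by
          calc ∑ k, Z t i k * φ k = ∑ k, η * (1 - Pi t i) / den *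
              (s i k * (α k * θmin) * ft k t * fΓ k (∑ j, s j k * Pi t j)) :=
              Finset.sum_congr rfl fun k _ => hterm2 k
            _ = η * (1 - Pi t i) / den * den := by rw [← Finset.mul_sum, ← hden_def]
            _ = η * (1 - Pi t i) := div_mul_cancel₀ _ hden0
        rw [hsum]
        nlinarith
    -- first conclusion : prices are non-increasing
    obtain ⟨k0, -, hk0⟩ := Finset.exists_max_image Finset.univ (fun k => q' t k / φ k) hUm
    have hq'le : ∀ k, q' t k ≤ q' t k0 / φ k0 * φ k := by
      intro k
      calc q' t k = q' t k / φ k * φ k := (div_mul_cancel₀ _ (ne_of_gt (hφpos k))).symm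
        _ ≤ q' t k0 / φ k0 * φ k :=
            mul_le_mul_of_nonneg_right (hk0 k (Finset.mem_univ k)) (le_of_lt (hφpos k))
    have hC1 : ∀ k, q' t k ≤ 0 := by
      rcases le_or_gt (q' t k0) 0 with hle | hpos
      · intro k
        have hr : q' t k0 / φ k0 ≤ 0 :=
          div_nonpos_of_nonpos_of_nonneg hle (le_of_lt (hφpos k0))
        have h2 := mul_le_mul_of_nonneg_right hr (le_of_lt (hφpos k))
        calc q' t k ≤ q' t k0 / φ k0 * φ k := hq'le k
          _ ≤ 0 := by linarith [h2]
      · exfalso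
        set cm : ℝ := q' t k0 / φ k0 with hcm_def
        have hcm : 0 < cm := div_pos hpos (hφpos k0)
        have hPi'lb : ∀ i, -((1 - Pi t i) * cm) ≤ Pi' t i := by
          intro i
          rw [hREL t ht i]
          have h1 : ∑ k, Z t i k * q' t k ≤ ∑ k, Z t i k * (cm * φ k) := by
            refine Finset.sum_le_sum fun k _ => ?_
            refine mul_le_mul_of_nonneg_left ?_ (hZnn i k)
            exact hq'le k
          have h2 : ∑ k, Z t i k * (cm * φ k) = cm * ∑ k, Z t i k * φ k := by
            rw [Finset.mul_sum]
            exact Finset.sum_congr rfl fun k _ => by ring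
          have h3 : cm * ∑ k, Z t i k * φ k ≤ cm * (1 - Pi t i) :=
            mul_le_mul_of_nonneg_left (hrow i) (le_of_lt hcm)
          have h4 : ∑ k, Z t i k * q' t k ≤ cm * (1 - Pi t i) := by
            rw [h2] at h1
            linarith
          linarith
        have hW : -(cm * ((∑ j, s j k0) - ∑ j, s j k0 * Pi t j)) ≤
            ∑ j, s j k0 * Pi' t j := by
          have h1 : ∀ j, s j k0 * (-((1 - Pi t j) * cm)) ≤ s j k0 * Pi' t j :=
            fun j => mul_le_mul_of_nonneg_left (hPi'lb j) (hs j k0)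
          have h2 := Finset.sum_le_sum (s := Finset.univ) (fun j _ => h1 j)
          have h3 : ∑ j, s j k0 * (-((1 - Pi t j) * cm)) =
              -(cm * ((∑ j, s j k0) - ∑ j, s j k0 * Pi t j)) := by
            have e1 : ∀ j, s j k0 * (-((1 - Pi t j) * cm)) =
                -(cm * s j k0) + cm * (s j k0 * Pi t j) := fun j => by ring
            calc ∑ j, s j k0 * (-((1 - Pi t j) * cm))
                = ∑ j, (-(cm * s j k0) + cm * (s j k0 * Pi t j)) :=
                  Finset.sum_congr rfl fun j _ => e1 j
              _ = (∑ j, -(cm * s j k0)) + ∑ j, cm * (s j k0 * Pi t j) :=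
                  Finset.sum_add_distrib
              _ = -(∑ j, cm * s j k0) + ∑ j, cm * (s j k0 * Pi t j) := by
                  rw [Finset.sum_neg_distrib]
              _ = -(cm * ∑ j, s j k0) + cm * ∑ j, s j k0 * Pi t j := by
                  rw [← Finset.mul_sum, ← Finset.mul_sum]
              _ = -(cm * ((∑ j, s j k0) - ∑ j, s j k0 * Pi t j)) := by ring
          rw [← h3]
          exact h2
        have hCRk := hCR t ht k0
        have hd0 : deriv (fΓ k0) (∑ j, s j k0 * Pi t j) ≤ 0 := hdΓ k0 _
        have h5 : deriv (fΓ k0) (∑ j, s j k0 * Pi t j) * (∑ j, s j k0 * Pi' t j) ≤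
            deriv (fΓ k0) (∑ j, s j k0 * Pi t j) *
              (-(cm * ((∑ j, s j k0) - ∑ j, s j k0 * Pi t j))) :=
          mul_le_mul_of_nonpos_left hW hd0
        have h6 := mul_le_mul_of_nonneg_left h5 (le_of_lt (hF k0))
        have hQk := hQ k0
        have h7 : cm * (ft k0 t * ((-(deriv (fΓ k0) (∑ j, s j k0 * Pi t j))) *
            ((∑ j, s j k0) - ∑ j, s j k0 * Pi t j))) ≤
            cm * (ft k0 t * (ρt k0 * (c k0 * fΓ k0 (∑ j, s j k0 * Pi t j)))) :=
          mul_le_mul_of_nonneg_left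
            (mul_le_mul_of_nonneg_left hQk (le_of_lt (hF k0))) (le_of_lt hcm)
        have heG : deriv (ft k0) t * fΓ k0 (∑ j, s j k0 * Pi t j) ≤ 0 := by
          have := mul_le_mul_of_nonneg_right (hdft k0 t ht0) (le_of_lt (hG k0))
          simpa using this
        have hφid : ft k0 t * (ρt k0 * (c k0 * fΓ k0 (∑ j, s j k0 * Pi t j))) =
            ρt k0 * φ k0 := by
          rw [hφ_def]
          ring
        have hring : ft k0 t * (deriv (fΓ k0) (∑ j, s j k0 * Pi t j) *
            (-(cm * ((∑ j, s j k0) - ∑ j, s j k0 * Pi t j)))) =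
            cm * (ft k0 t * ((-(deriv (fΓ k0) (∑ j, s j k0 * Pi t j))) *
              ((∑ j, s j k0) - ∑ j, s j k0 * Pi t j))) := by ring
        have h7' : cm * (ft k0 t * (ρt k0 * (c k0 * fΓ k0 (∑ j, s j k0 * Pi t j)))) =
            cm * (ρt k0 * φ k0) := by rw [hφid]
        have hfin : q' t k0 ≤ cm * (ρt k0 * φ k0) := by
          rw [hCRk]
          linarith [h6, h7, heG, hring, h7']
        have hq'eq : cm * φ k0 = q' t k0 := by
          rw [hcm_def]
          exact div_mul_cancel₀ _ (ne_of_gt (hφpos k0))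
        have hlt : cm * (ρt k0 * φ k0) < cm * φ k0 := by
          have hstep := mul_lt_mul_of_pos_right (hρt_lt1 k0) (hφpos k0)
          have := mul_lt_mul_of_pos_left hstep hcm
          simpa using this
        linarith
    have hC2 : ∀ i, 0 ≤ Pi' t i := by
      intro i
      rw [hREL t ht i]
      rw [neg_nonneg]
      refine Finset.sum_nonpos fun k _ => ?_
      have := mul_le_mul_of_nonneg_left (hC1 k) (hZnn i k)
      simpa using this
    obtain ⟨k1, -, hk1⟩ := Finset.exists_max_image Finset.univ (fun k => -q' t k / φ k) hUm
    set cp : ℝ := -q' t k1 / φ k1 with hcp_def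
    have hcp0 : 0 ≤ cp := div_nonneg (neg_nonneg.mpr (hC1 k1)) (le_of_lt (hφpos k1))
    have hub : ∀ i, Pi' t i ≤ (1 - Pi t i) * cp := by
      intro i
      rw [hREL t ht i]
      have h1 : ∀ k, -q' t k ≤ cp * φ k := by
        intro k
        calc -q' t k = -q' t k / φ k * φ k :=
            (div_mul_cancel₀ _ (ne_of_gt (hφpos k))).symm
          _ ≤ cp * φ k :=
            mul_le_mul_of_nonneg_right (hk1 k (Finset.mem_univ k)) (le_of_lt (hφpos k))
      have h2 : -∑ k, Z t i k * q' t k = ∑ k, Z t i k * (-q' t k) := by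
        rw [← Finset.sum_neg_distrib]
        exact Finset.sum_congr rfl fun k _ => by ring
      rw [h2]
      calc ∑ k, Z t i k * (-q' t k) ≤ ∑ k, Z t i k * (cp * φ k) :=
          Finset.sum_le_sum fun k _ => mul_le_mul_of_nonneg_left (h1 k) (hZnn i k)
        _ = cp * ∑ k, Z t i k * φ k := by
            rw [Finset.mul_sum]
            exact Finset.sum_congr rfl fun k _ => by ring
        _ ≤ cp * (1 - Pi t i) := mul_le_mul_of_nonneg_left (hrow i) hcp0
        _ = (1 - Pi t i) * cp := mul_comm _ _
    refine ⟨hC1, hC2, ?_⟩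
    have hcpK : cp ≤ K := by
      have hW1 : ∑ j, s j k1 * Pi' t j ≤
          cp * ((∑ j, s j k1) - ∑ j, s j k1 * Pi t j) := by
        have h1 : ∀ j, s j k1 * Pi' t j ≤ s j k1 * ((1 - Pi t j) * cp) :=
          fun j => mul_le_mul_of_nonneg_left (hub j) (hs j k1)
        calc ∑ j, s j k1 * Pi' t j ≤ ∑ j, s j k1 * ((1 - Pi t j) * cp) :=
            Finset.sum_le_sum fun j _ => h1 j
          _ = (∑ j, cp * s j k1) - ∑ j, cp * (s j k1 * Pi t j) := by
              rw [← Finset.sum_sub_distrib]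
              exact Finset.sum_congr rfl fun j _ => by ring
          _ = cp * ((∑ j, s j k1) - ∑ j, s j k1 * Pi t j) := by
              rw [← Finset.mul_sum, ← Finset.mul_sum]
              ring
      have hd1 : deriv (fΓ k1) (∑ j, s j k1 * Pi t j) ≤ 0 := hdΓ k1 _
      have h2 : deriv (fΓ k1) (∑ j, s j k1 * Pi t j) *
          (cp * ((∑ j, s j k1) - ∑ j, s j k1 * Pi t j)) ≤
          deriv (fΓ k1) (∑ j, s j k1 * Pi t j) * (∑ j, s j k1 * Pi' t j) :=
        mul_le_mul_of_nonpos_left hW1 hd1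
      have h2' := mul_le_mul_of_nonneg_left h2 (le_of_lt (hF k1))
      have hCRk := hCR t ht k1
      have hQl := hQ k1
      have h4 : cp * (ft k1 t * ((-(deriv (fΓ k1) (∑ j, s j k1 * Pi t j))) *
          ((∑ j, s j k1) - ∑ j, s j k1 * Pi t j))) ≤
          cp * (ft k1 t * (ρt k1 * (c k1 * fΓ k1 (∑ j, s j k1 * Pi t j)))) :=
        mul_le_mul_of_nonneg_left
          (mul_le_mul_of_nonneg_left hQl (le_of_lt (hF k1))) hcp0
      have h5 : ft k1 t * (ρt k1 * (c k1 * fΓ k1 (∑ j, s j k1 * Pi t j))) =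
          ρt k1 * φ k1 := by
        rw [hφ_def]
        ring
      have h6 : ρt k1 * φ k1 ≤ ρhat * φ k1 :=
        mul_le_mul_of_nonneg_right (hρt_le_ρhat k1) (le_of_lt (hφpos k1))
      have hcpφ : cp * φ k1 = -q' t k1 := by
        rw [hcp_def]
        exact div_mul_cancel₀ _ (ne_of_gt (hφpos k1))
      have h7 : cp * φ k1 ≤ (-(deriv (ft k1) t)) * fΓ k1 (∑ j, s j k1 * Pi t j) +
          cp * (ρhat * φ k1) := by
        have hcpr : cp * (ρt k1 * φ k1) ≤ cp * (ρhat * φ k1) :=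
          mul_le_mul_of_nonneg_left h6 hcp0
        have hring : ft k1 t * (deriv (fΓ k1) (∑ j, s j k1 * Pi t j) *
            (cp * ((∑ j, s j k1) - ∑ j, s j k1 * Pi t j))) =
            -(cp * (ft k1 t * ((-(deriv (fΓ k1) (∑ j, s j k1 * Pi t j))) *
              ((∑ j, s j k1) - ∑ j, s j k1 * Pi t j)))) := by ring
        have h5' : cp * (ft k1 t * (ρt k1 * (c k1 * fΓ k1 (∑ j, s j k1 * Pi t j)))) =
            cp * (ρt k1 * φ k1) := by rw [h5]
        rw [hcpφ, hCRk]
        linarith [h2', h4, hring, h5', hcpr]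
      have h8 : -(deriv (ft k1) t) / (c k1 * ft k1 t) ≤ C k1 := hC k1 t ht
      have hposf : 0 < c k1 * ft k1 t := mul_pos (hcpos k1) (hF k1)
      have h8' := (div_le_iff₀ hposf).mp h8
      have h9 : (-(deriv (ft k1) t)) * fΓ k1 (∑ j, s j k1 * Pi t j) ≤ C k1 * φ k1 := by
        calc (-(deriv (ft k1) t)) * fΓ k1 (∑ j, s j k1 * Pi t j) ≤
            (C k1 * (c k1 * ft k1 t)) * fΓ k1 (∑ j, s j k1 * Pi t j) :=
              mul_le_mul_of_nonneg_right h8' (le_of_lt (hG k1))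
          _ = C k1 * φ k1 := by
              rw [hφ_def]
              ring
      have h10 : cp * (1 - ρhat) * φ k1 ≤ C k1 * φ k1 := by linarith [h7, h9]
      have h11 : cp * (1 - ρhat) ≤ C k1 := le_of_mul_le_mul_right h10 (hφpos k1)
      have h12 : C k1 ≤ Finset.univ.sup' hUm C := Finset.le_sup' C (Finset.mem_univ k1)
      rw [hK_def, le_div_iff₀ (by linarith : (0:ℝ) < 1 - ρhat)]
      linarith
    intro i
    calc Pi' t i ≤ (1 - Pi t i) * cp := hub i
      _ ≤ (1 - Pi t i) * K := mul_le_mul_of_nonneg_left hcpK (by linarith [hP1 i])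
  -- the good region
  set good : ℝ → Prop := fun t => (∀ i, Pi t i < 1) ∧ ∀ k,
      (-(deriv (fΓ k) (∑ j, s j k * Pi t j))) *
          ((∑ j, s j k) - ∑ j, s j k * Pi t j)
        < ρt k * (c k * fΓ k (∑ j, s j k * Pi t j)) with hgood_def
  have hgood0 : good 0 := by
    simp only [hgood_def]
    constructor
    · intro i
      simp [hPi0]
    · intro k
      have hsum0 : ∑ j, s j k * Pi 0 j = 0 := by simp [hPi0]
      rw [hsum0, hfΓ0 k]
      have h1 : (-(deriv (fΓ k) 0)) * (∑ j, s j k) ≤ (-(deriv (fΓ k) 0)) * M k :=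
        mul_le_mul_of_nonneg_left (hM k) (neg_nonneg.mpr (hdΓ k 0))
      have h2 : M k * (-(deriv (fΓ k) 0)) = ρbar k * c k := (hρbarc k).symm
      have h3 : ρbar k * c k < ρt k * c k :=
        mul_lt_mul_of_pos_right (hρbar_lt_ρt k) (hcpos k)
      have h4 : (-(deriv (fΓ k) 0)) * ((∑ j, s j k) - 0) = (-(deriv (fΓ k) 0)) * (∑ j, s j k) := by ring
      rw [h4]
      nlinarith
  -- monotonicity of each Pi_i up to a good time
  have hMONO : ∀ b ∈ Icc 0 T, (∀ u, 0 ≤ u → u < b → good u) →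
      ∀ i, MonotoneOn (fun τ => Pi τ i) (Icc 0 b) := by
    intro b hb hg i
    have hsub : Icc (0:ℝ) b ⊆ Icc 0 T := Icc_subset_Icc le_rfl hb.2
    apply monotoneOn_of_deriv_nonneg (convex_Icc 0 b)
    · intro τ hτ
      exact ((hPic τ (hsub hτ) i).continuousAt).continuousWithinAt
    · intro τ hτ
      rw [interior_Icc] at hτ
      exact ((hPic τ (hsub ⟨le_of_lt hτ.1, le_of_lt hτ.2⟩) i).differentiableAt).differentiableWithinAt
    · intro τ hτ
      rw [interior_Icc] at hτ
      have hτT : τ ∈ Icc 0 T := ⟨le_of_lt hτ.1, le_trans (le_of_lt hτ.2) hb.2⟩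
      have hgd := hg τ (le_of_lt hτ.1) hτ.2
      simp only [hgood_def] at hgd
      have hsig := hSIGN τ hτT (fun i => le_of_lt (hgd.1 i)) (fun k => le_of_lt (hgd.2 k))
      rw [(hPic τ hτT i).deriv]
      exact hsig.2.1 i
  -- barrier bound
  have hBAR : ∀ b ∈ Icc 0 T, (∀ u, 0 ≤ u → u < b → good u) →
      ∀ i, Pi b i ≤ 1 - Real.exp (-(K * b)) := by
    intro b hb hg i
    have hsub : Icc (0:ℝ) b ⊆ Icc 0 T := Icc_subset_Icc le_rfl hb.2
    have hder : ∀ τ ∈ Icc 0 T, HasDerivAt (fun τ => (1 - Pi τ i) * Real.exp (K * τ))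
        ((0 - Pi' τ i) * Real.exp (K * τ) + (1 - Pi τ i) * (Real.exp (K * τ) * (K * 1))) τ := by
      intro τ hτ
      have h1 : HasDerivAt (fun τ => 1 - Pi τ i) (0 - Pi' τ i) τ :=
        (hasDerivAt_const τ (1:ℝ)).sub (hPic τ hτ i)
      have h2 : HasDerivAt (fun τ => K * τ) (K * 1) τ := (hasDerivAt_id τ).const_mul K
      have h3 : HasDerivAt (fun τ => Real.exp (K * τ)) (Real.exp (K * τ) * (K * 1)) τ :=
        (Real.hasDerivAt_exp (K * τ)).comp τ h2
      exact h1.mul h3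
    have hmono_h : MonotoneOn (fun τ => (1 - Pi τ i) * Real.exp (K * τ)) (Icc 0 b) := by
      apply monotoneOn_of_deriv_nonneg (convex_Icc 0 b)
      · intro τ hτ
        exact ((hder τ (hsub hτ)).continuousAt).continuousWithinAt
      · intro τ hτ
        rw [interior_Icc] at hτ
        exact ((hder τ (hsub ⟨le_of_lt hτ.1, le_of_lt hτ.2⟩)).differentiableAt).differentiableWithinAt
      · intro τ hτ
        rw [interior_Icc] at hτ
        have hτT : τ ∈ Icc 0 T := ⟨le_of_lt hτ.1, le_trans (le_of_lt hτ.2) hb.2⟩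
        have hgd := hg τ (le_of_lt hτ.1) hτ.2
        simp only [hgood_def] at hgd
        have hsig := hSIGN τ hτT (fun i => le_of_lt (hgd.1 i)) (fun k => le_of_lt (hgd.2 k))
        have hKb := hsig.2.2 i
        rw [(hder τ hτT).deriv]
        have hexp : 0 < Real.exp (K * τ) := Real.exp_pos _
        nlinarith
    have h0b : (0:ℝ) ∈ Icc 0 b := ⟨le_rfl, hb.1⟩
    have hbb : b ∈ Icc 0 b := ⟨hb.1, le_rfl⟩
    have hge : (1 - Pi 0 i) * Real.exp (K * 0) ≤ (1 - Pi b i) * Real.exp (K * b) :=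
      hmono_h h0b hbb hb.1
    have hh0 : (1 - Pi 0 i) * Real.exp (K * 0) = 1 := by simp [hPi0]
    rw [hh0] at hge
    have hexp : 0 < Real.exp (K * b) := Real.exp_pos _
    have h2 : Real.exp (-(K * b)) ≤ 1 - Pi b i := by
      rw [Real.exp_neg, inv_eq_one_div, div_le_iff₀ hexp]
      linarith
    linarith
  -- propagation of goodness to the endpoint
  have hstep3 : ∀ b ∈ Icc 0 T, (∀ u, 0 ≤ u → u < b → good u) → good b := by
    intro b hb hg
    have hmono_i := hMONO b hb hg
    have h0b : (0:ℝ) ∈ Icc 0 b := ⟨le_rfl, hb.1⟩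
    have hbb : b ∈ Icc 0 b := ⟨hb.1, le_rfl⟩
    have hP0b : ∀ i, 0 ≤ Pi b i := by
      intro i
      have := hmono_i i h0b hbb hb.1
      simpa [hPi0] using this
    have hPlt1 : ∀ i, Pi b i < 1 := by
      intro i
      have h1 := hBAR b hb hg i
      have h2 := Real.exp_pos (-(K * b))
      linarith
    simp only [hgood_def]
    refine ⟨hPlt1, ?_⟩
    intro k
    by_cases hSig : (∑ j, s j k) = 0
    · have hs0 : ∀ j ∈ Finset.univ, s j k = 0 :=
        fun j hj => (Finset.sum_eq_zero_iff_of_nonneg (fun j _ => hs j k)).mp hSig j hj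
      have hsum0 : ∑ j, s j k * Pi b j = 0 :=
        Finset.sum_eq_zero fun j hj => by rw [hs0 j hj, zero_mul]
      rw [hsum0, hSig, hfΓ0 k]
      have := mul_pos (hρt_pos k) (mul_pos (hcpos k) one_pos)
      nlinarith
    · have hSigpos : 0 < ∑ j, s j k :=
        lt_of_le_of_ne (Finset.sum_nonneg fun j _ => hs j k) (Ne.symm hSig)
      obtain ⟨j0, -, hj0⟩ : ∃ j ∈ Finset.univ, 0 < s j k := by
        by_contra hcon
        push_neg at hcon
        have : ∑ j, s j k ≤ 0 := Finset.sum_nonpos fun j hj => hcon j hj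
        linarith
      have hub0 : 0 ≤ ∑ j, s j k * Pi b j :=
        Finset.sum_nonneg fun j _ => mul_nonneg (hs j k) (hP0b j)
      have hubSig : ∑ j, s j k * Pi b j < ∑ j, s j k := by
        have hterm : ∀ j, s j k * Pi b j ≤ s j k := fun j => by
          calc s j k * Pi b j ≤ s j k * 1 :=
              mul_le_mul_of_nonneg_left (le_of_lt (hPlt1 j)) (hs j k)
            _ = s j k := mul_one _
        have hterm0 : s j0 k * Pi b j0 < s j0 k := by
          calc s j0 k * Pi b j0 < s j0 k * 1 := mul_lt_mul_of_pos_left (hPlt1 j0) hj0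
            _ = s j0 k := mul_one _
        exact Finset.sum_lt_sum (fun j _ => hterm j) ⟨j0, Finset.mem_univ j0, hterm0⟩
      have hubM : ∑ j, s j k * Pi b j < M k := lt_of_lt_of_le hubSig (hM k)
      have hMk : 0 < M k := lt_of_lt_of_le hSigpos (hM k)
      have hkey := hmono k ⟨le_rfl, hMk⟩ ⟨hub0, hubM⟩ hub0
      dsimp only at hkey
      rw [hfΓ0 k, sub_zero, div_one] at hkey
      set ub : ℝ := ∑ j, s j k * Pi b j with hub_def
      have hG : 0 < fΓ k ub := hfΓpos k ub
      have h1 : M k * deriv (fΓ k) 0 * fΓ k ub ≤ (M k - ub) * deriv (fΓ k) ub :=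
        (le_div_iff₀ hG).mp hkey
      have h2 : (-(deriv (fΓ k) ub)) * ((∑ j, s j k) - ub) ≤
          (-(deriv (fΓ k) ub)) * (M k - ub) :=
        mul_le_mul_of_nonneg_left (sub_le_sub_right (hM k) ub) (neg_nonneg.mpr (hdΓ k ub))
      have h3 : (-(deriv (fΓ k) ub)) * (M k - ub) ≤ M k * (-(deriv (fΓ k) 0)) * fΓ k ub := by
        nlinarith
      have h4 : M k * (-(deriv (fΓ k) 0)) * fΓ k ub = ρbar k * c k * fΓ k ub := by
        rw [hρbarc k]
      have h5 : ρbar k * c k * fΓ k ub < ρt k * (c k * fΓ k ub) := by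
        have := mul_lt_mul_of_pos_right (hρbar_lt_ρt k) (mul_pos (hcpos k) hG)
        calc ρbar k * c k * fΓ k ub = ρbar k * (c k * fΓ k ub) := mul_assoc _ _ _
          _ < ρt k * (c k * fΓ k ub) := this
      linarith
  -- the invariance argument
  have hAll : ∀ u ∈ Icc 0 T, good u := by
    set A : Set ℝ := {τ | τ ∈ Icc 0 T ∧ ∀ u ∈ Icc 0 τ, good u} with hA_def
    have hA0 : (0:ℝ) ∈ A := by
      refine ⟨⟨le_rfl, hT⟩, fun u hu => ?_⟩
      have : u = 0 := le_antisymm hu.2 hu.1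
      rw [this]
      exact hgood0
    have hAbdd : BddAbove A := ⟨T, fun a ha => ha.1.2⟩
    have hAne : A.Nonempty := ⟨0, hA0⟩
    set t₀ : ℝ := sSup A with ht₀_def
    have ht₀mem : t₀ ∈ Icc 0 T := ⟨le_csSup hAbdd hA0, csSup_le hAne fun a ha => ha.1.2⟩
    have hgood_lt : ∀ u, 0 ≤ u → u < t₀ → good u := by
      intro u hu0 hu
      obtain ⟨a, haA, hua⟩ := exists_lt_of_lt_csSup hAne hu
      exact haA.2 u ⟨hu0, le_of_lt hua⟩
    have ht₀good : good t₀ := hstep3 t₀ ht₀mem hgood_lt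
    have ht₀A : t₀ ∈ A := by
      refine ⟨ht₀mem, fun u hu => ?_⟩
      rcases lt_or_eq_of_le hu.2 with h | h
      · exact hgood_lt u hu.1 h
      · rw [h]
        exact ht₀good
    have ht₀T : t₀ = T := by
      by_contra hne
      have hlt : t₀ < T := lt_of_le_of_ne ht₀mem.2 hne
      have ht₀g := ht₀good
      simp only [hgood_def] at ht₀g
      have hev : ∀ᶠ τ in nhds t₀, good τ := by
        simp only [hgood_def]
        refine Filter.Eventually.and ?_ ?_
        · refine Filter.eventually_all.mpr fun i => ?_
          exact (((hPic t₀ ht₀mem i).continuousAt).tendsto).eventually_lt_const (ht₀g.1 i)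
        · refine Filter.eventually_all.mpr fun k => ?_
          have hsum : ContinuousAt (fun τ => ∑ j, s j k * Pi τ j) t₀ :=
            (hud t₀ ht₀mem k).continuousAt
          have hder : ContinuousAt (fun τ => deriv (fΓ k) (∑ j, s j k * Pi τ j)) t₀ :=
            (((hfΓC k).continuous_deriv one_le_two).continuousAt).comp hsum
          have hfΓc : ContinuousAt (fun τ => fΓ k (∑ j, s j k * Pi τ j)) t₀ :=
            ((hfΓC k).continuous.continuousAt).comp hsum
          have hcont : ContinuousAt (fun τ =>
              ρt k * (c k * fΓ k (∑ j, s j k * Pi τ j)) -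
              (-(deriv (fΓ k) (∑ j, s j k * Pi τ j))) *
                ((∑ j, s j k) - ∑ j, s j k * Pi τ j)) t₀ :=
            (continuousAt_const.mul (continuousAt_const.mul hfΓc)).sub
              ((hder.neg).mul (continuousAt_const.sub hsum))
          have hpos : (0:ℝ) < ρt k * (c k * fΓ k (∑ j, s j k * Pi t₀ j)) -
              (-(deriv (fΓ k) (∑ j, s j k * Pi t₀ j))) *
                ((∑ j, s j k) - ∑ j, s j k * Pi t₀ j) :=
            sub_pos.mpr (ht₀g.2 k)
          filter_upwards [hcont.tendsto.eventually_const_lt hpos] with τ hτ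
          linarith
      obtain ⟨ε, hε, hball⟩ := Metric.eventually_nhds_iff.mp hev
      set b : ℝ := min (t₀ + ε/2) T with hb_def
      have hbt₀ : t₀ < b := lt_min (by linarith) hlt
      have hbmem : b ∈ Icc 0 T := ⟨le_trans ht₀mem.1 (le_of_lt hbt₀), min_le_right _ _⟩
      have hbA : b ∈ A := by
        refine ⟨hbmem, fun u hu => ?_⟩
        rcases le_or_gt u t₀ with h | h
        · exact ht₀A.2 u ⟨hu.1, h⟩
        · apply hball
          rw [Real.dist_eq, abs_of_pos (sub_pos.mpr h)]
          have h1 : u ≤ t₀ + ε/2 := le_trans hu.2 (min_le_left _ _)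
          linarith
      have := le_csSup hAbdd hbA
      linarith
    intro u hu
    rcases lt_or_eq_of_le hu.2 with h | h
    · exact hgood_lt u hu.1 (by rw [ht₀T]; exact h)
    · rw [h, ← ht₀T]
      exact ht₀good
  -- conclusion
  intro t ht
  have hg := hAll t ht
  have hsign := hSIGN t ht (fun i => le_of_lt (hg.1 i)) (fun k => le_of_lt (hg.2 k))
  refine ⟨fun i => ⟨?_, hg.1 i⟩, hsign.2.1, hsign.1⟩
  have hmono_i := hMONO t ht (fun u h0 hlt => hAll u ⟨h0, le_trans (le_of_lt hlt) ht.2⟩) i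
  have h0t : (0:ℝ) ∈ Icc 0 t := ⟨le_rfl, ht.1⟩
  have htt : t ∈ Icc 0 t := ⟨ht.1, le_rfl⟩
  have := hmono_i h0t htt ht.1
  simpa [hPi0] using this
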